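/- arXiv:2005.07975 — 2 statements merged into one kernel-verified Lean document; each statement's English description precedes it below -/
import Mathlib

section
/- Let G be a topological group and B ⊆ A two subgroups of G such that the coset space A/B is finite. Then the coset space of the closures, cl(A)/cl(B), is also finite; in fact its cardinality is at most that of A/B. -/
open scoped Pointwise


/-- Let `B ⊆ A` be subgroups of a topological group `G` with finitely many cosets of `B`
in `A`. Then the coset space `cl(A)/cl(B)` of the topological closures is also finite,
with cardinality at most that of `A/B`. -/
theorem closure_coset_space_finite {G : Type*} [Group G] [TopologicalSpace G]
    [IsTopologicalGroup G] (A B : Subgroup G) (hBA : B ≤ A)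
    (hfin : Finite (A ⧸ B.subgroupOf A)) :
    Finite (A.topologicalClosure ⧸
      (B.topologicalClosure.subgroupOf A.topologicalClosure)) ∧
    Nat.card (A.topologicalClosure ⧸
      (B.topologicalClosure.subgroupOf A.topologicalClosure)) ≤
      Nat.card (A ⧸ B.subgroupOf A) := by
  classical
  set Q := A ⧸ B.subgroupOf A
  let s : Q → A := Quotient.out
  have hcover : (A.topologicalClosure : Set G) ⊆
      ⋃ q : Q, (s q : G) • (B.topologicalClosure : Set G) := by
    have hclosed : IsClosed (⋃ q : Q, (s q : G) • (B.topologicalClosure : Set G)) := by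
      apply isClosed_iUnion_of_finite
      intro q
      exact B.isClosed_topologicalClosure.smul _
    have hsub : (A : Set G) ⊆ ⋃ q : Q, (s q : G) • (B.topologicalClosure : Set G) := by
      intro x hx
      set q : Q := QuotientGroup.mk (⟨x, hx⟩ : A) with hq
      have hout : QuotientGroup.mk (s q) = q := Quotient.out_eq q
      have hmem : (s q)⁻¹ * ⟨x, hx⟩ ∈ B.subgroupOf A := by
        rw [← QuotientGroup.eq]
        exact hout.trans hq
      have : (s q : G)⁻¹ * x ∈ B := hmem
      refine Set.mem_iUnion.mpr ⟨q, ?_⟩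
      rw [Set.mem_smul_set_iff_inv_smul_mem, smul_eq_mul]
      exact B.le_topologicalClosure this
    exact closure_minimal hsub hclosed
  have hsurj : Function.Surjective
      (fun q : Q => (QuotientGroup.mk ⟨(s q : G), A.le_topologicalClosure (s q).2⟩ :
        A.topologicalClosure ⧸ (B.topologicalClosure.subgroupOf A.topologicalClosure))) := by
    intro y
    induction y using QuotientGroup.induction_on with
    | H x =>
      obtain ⟨q, hq⟩ := Set.mem_iUnion.mp (hcover x.2)
      refine ⟨q, ?_⟩
      rw [QuotientGroup.eq]
      have : (s q : G)⁻¹ * x ∈ B.topologicalClosure :=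
        (by simpa [smul_eq_mul] using Set.mem_smul_set_iff_inv_smul_mem.mp hq :
          (s q : G)⁻¹ * x ∈ closure (B : Set G))
      exact Subgroup.mem_subgroupOf.mpr this
  refine ⟨Finite.of_surjective _ hsurj, Nat.card_le_card_of_surjective _ hsurj⟩
end

section
/- Let G be a simply connected Lie group and H ⊆ G a closed subgroup. Any continuous group homomorphism φ: H → (ℝ_{>0}, ·) admits a continuous extension m: G → ℝ_{>0} satisfying m(hy) = φ(h)·m(y) for all h ∈ H and y ∈ G, provided the identity component H_e lies in the kernel of φ and the quotient H\G is a compact manifold. -/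
open Set MeasureTheory
open scoped Topology NNReal

namespace EMH

variable {G : Type*} [Group G] [TopologicalSpace G] [IsTopologicalGroup G]

/-- A nice set: open, symmetric neighborhood of 1. -/
def Nice (V : Set G) : Prop := IsOpen V ∧ (1:G) ∈ V ∧ ∀ v ∈ V, v⁻¹ ∈ V

lemma exists_symm_cube {U : Set G} (hUo : IsOpen U) (hU1 : (1:G) ∈ U) :
    ∃ V : Set G, Nice V ∧ ∀ a ∈ V, ∀ b ∈ V, ∀ c ∈ V, a * b * c ∈ U := by
  obtain ⟨V₁, hV₁o, hV₁1, hV₁⟩ := exists_open_nhds_one_mul_subset (hUo.mem_nhds hU1)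
  obtain ⟨V₂, hV₂o, hV₂1, hV₂⟩ := exists_open_nhds_one_mul_subset (hV₁o.mem_nhds hV₁1)
  have hV₂sub : V₂ ⊆ V₁ := fun c hc => by
    have : c * 1 ∈ V₁ := hV₂ (Set.mul_mem_mul hc hV₂1)
    simpa using this
  refine ⟨V₂ ∩ V₂⁻¹, ⟨hV₂o.inter (hV₂o.preimage continuous_inv), ⟨hV₂1, by simp [hV₂1]⟩, ?_⟩, ?_⟩
  · rintro v ⟨hv1, hv2⟩
    exact ⟨by simpa using hv2, by simpa using hv1⟩
  · rintro a ⟨ha, -⟩ b ⟨hb, -⟩ c ⟨hc, -⟩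
    exact hV₁ (Set.mul_mem_mul (hV₂ (Set.mul_mem_mul ha hb)) (hV₂sub hc))

variable (V₀ : Set G) (h₀ : Nice V₀)

/-- A chain of symmetric open neighborhoods of 1 with `chain (n+1) ^ 3 ⊆ chain n`. -/
noncomputable def chain : ℕ → {V : Set G // Nice V}
  | 0 => ⟨V₀, h₀⟩
  | n+1 => ⟨(exists_symm_cube (chain n).2.1 (chain n).2.2.1).choose,
      (exists_symm_cube (chain n).2.1 (chain n).2.2.1).choose_spec.1⟩

lemma chain_cube (n : ℕ) : ∀ a ∈ (chain V₀ h₀ (n+1)).1, ∀ b ∈ (chain V₀ h₀ (n+1)).1,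
    ∀ c ∈ (chain V₀ h₀ (n+1)).1, a * b * c ∈ (chain V₀ h₀ n).1 := by
  have := (exists_symm_cube (chain V₀ h₀ n).2.1 (chain V₀ h₀ n).2.2.1).choose_spec.2
  simpa [chain] using this

lemma chain_one_mem (n : ℕ) : (1:G) ∈ (chain V₀ h₀ n).1 := (chain V₀ h₀ n).2.2.1

lemma chain_inv {n : ℕ} {v : G} (hv : v ∈ (chain V₀ h₀ n).1) : v⁻¹ ∈ (chain V₀ h₀ n).1 :=
  (chain V₀ h₀ n).2.2.2 v hv

lemma chain_succ_subset (n : ℕ) : (chain V₀ h₀ (n+1)).1 ⊆ (chain V₀ h₀ n).1 := by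
  intro a ha
  have := chain_cube V₀ h₀ n a ha 1 (chain_one_mem V₀ h₀ (n+1)) 1 (chain_one_mem V₀ h₀ (n+1))
  simpa using this

lemma chain_anti {m n : ℕ} (h : n ≤ m) : (chain V₀ h₀ m).1 ⊆ (chain V₀ h₀ n).1 := by
  induction h with
  | refl => exact fun _ h => h
  | step h ih => exact fun a ha => ih (chain_succ_subset V₀ h₀ _ ha)

/-- pre-distance level function -/
noncomputable def d0 (z : G) : ℝ≥0 :=
  sInf (insert 1 {r : ℝ≥0 | ∃ n : ℕ, r = 2⁻¹ ^ (n+1) ∧ z ∈ (chain V₀ h₀ (n+1)).1})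

lemma d0_le_one (z : G) : d0 V₀ h₀ z ≤ 1 := csInf_le (OrderBot.bddBelow _) (mem_insert _ _)

lemma d0_le_of_mem {z : G} {n : ℕ} (hz : z ∈ (chain V₀ h₀ (n+1)).1) :
    d0 V₀ h₀ z ≤ 2⁻¹ ^ (n+1) :=
  csInf_le (OrderBot.bddBelow _) (mem_insert_of_mem _ ⟨n, rfl, hz⟩)

lemma half_pos : (0:ℝ≥0) < 2⁻¹ := by
  rw [← NNReal.coe_lt_coe]; push_cast; norm_num

lemma two_mul_half_eq {a : ℝ≥0} : 2 * (a * 2⁻¹) = a := by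
  rw [← NNReal.coe_inj]; push_cast; ring

lemma half_lt_one : (2:ℝ≥0)⁻¹ < 1 := by
  rw [← NNReal.coe_lt_coe]; push_cast; norm_num

lemma half_pow_le_one (n : ℕ) : ((2:ℝ≥0)⁻¹) ^ n ≤ 1 :=
  pow_le_one₀ zero_le half_lt_one.le

lemma half_pow_anti {n m : ℕ} (h : n ≤ m) : ((2:ℝ≥0)⁻¹) ^ m ≤ 2⁻¹ ^ n :=
  pow_le_pow_of_le_one zero_le half_lt_one.le h

lemma d0_mem_of_lt {z : G} {n : ℕ} (hz : d0 V₀ h₀ z < 2⁻¹ ^ (n+1)) :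
    z ∈ (chain V₀ h₀ (n+1)).1 := by
  obtain ⟨r, hr, hrlt⟩ := exists_lt_of_csInf_lt (insert_nonempty _ _) hz
  rcases hr with rfl | ⟨m, rfl, hm⟩
  · exact absurd hrlt (not_lt.2 (half_pow_le_one (n+1)))
  · have hmn : n + 1 ≤ m + 1 := by
      by_contra hc
      push_neg at hc
      exact absurd (half_pow_anti hc.le) (not_le.2 hrlt)
    exact chain_anti V₀ h₀ hmn hm
  
lemma d0_one : d0 V₀ h₀ (1:G) = 0 := by
  by_contra h
  have hpos : 0 < d0 V₀ h₀ 1 := pos_iff_ne_zero.2 h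
  obtain ⟨k, hk⟩ := NNReal.exists_pow_lt_of_lt_one hpos half_lt_one
  have h1 : d0 V₀ h₀ 1 ≤ 2⁻¹ ^ (k+1) := d0_le_of_mem V₀ h₀ (chain_one_mem V₀ h₀ (k+1))
  exact absurd (lt_of_le_of_lt (h1.trans (half_pow_anti (by omega))) hk) (lt_irrefl _)

lemma d0_inv (z : G) : d0 V₀ h₀ z⁻¹ = d0 V₀ h₀ z := by
  unfold d0
  congr 1
  ext r
  simp only [mem_insert_iff, mem_setOf_eq]
  constructor <;> rintro (rfl | ⟨n, rfl, hm⟩)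
  · exact Or.inl rfl
  · exact Or.inr ⟨n, rfl, by simpa using chain_inv V₀ h₀ hm⟩
  · exact Or.inl rfl
  · exact Or.inr ⟨n, rfl, chain_inv V₀ h₀ hm⟩

lemma d0_eq_zero_iff {z : G} : d0 V₀ h₀ z = 0 ↔ ∀ n, z ∈ (chain V₀ h₀ (n+1)).1 := by
  constructor
  · intro h n
    exact d0_mem_of_lt V₀ h₀ (by rw [h]; positivity)
  · intro h
    by_contra hne
    have hpos : 0 < d0 V₀ h₀ z := pos_iff_ne_zero.2 hne
    obtain ⟨k, hk⟩ := NNReal.exists_pow_lt_of_lt_one hpos half_lt_one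
    exact absurd (lt_of_le_of_lt ((d0_le_of_mem V₀ h₀ (h k)).trans (half_pow_anti (by omega))) hk)
      (lt_irrefl _)

lemma d0_attained {z : G} (h1 : 0 < d0 V₀ h₀ z) (h2 : d0 V₀ h₀ z < 2⁻¹) :
    ∃ m : ℕ, d0 V₀ h₀ z = 2⁻¹ ^ (m+2) ∧ z ∈ (chain V₀ h₀ (m+2)).1 := by
  set S : Set ℕ := {n | z ∈ (chain V₀ h₀ (n+1)).1} with hS
  have hSne : S.Nonempty := ⟨0, d0_mem_of_lt V₀ h₀ (by simpa using h2)⟩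
  have hSbdd : BddAbove S := by
    by_contra hb
    have : ∀ n, z ∈ (chain V₀ h₀ (n+1)).1 := by
      intro n
      obtain ⟨m, hmS, hnm⟩ := not_bddAbove_iff.1 hb n
      exact chain_anti V₀ h₀ (show n+1 ≤ m+1 by omega) hmS
    exact absurd ((d0_eq_zero_iff V₀ h₀).2 this) h1.ne'
  set n₀ := sSup S with hn₀
  have hn₀S : n₀ ∈ S := Nat.sSup_mem hSne hSbdd
  have hval : d0 V₀ h₀ z = 2⁻¹ ^ (n₀+1) := by
    refine le_antisymm (d0_le_of_mem V₀ h₀ hn₀S) ?_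
    refine le_csInf (insert_nonempty _ _) ?_
    rintro r (rfl | ⟨m, rfl, hm⟩)
    · exact half_pow_le_one _
    · exact half_pow_anti (by have := le_csSup hSbdd (show m ∈ S from hm); omega)
  have hn₀pos : 1 ≤ n₀ := by
    by_contra hc
    push_neg at hc
    interval_cases n₀
    · rw [hval, pow_one] at h2; exact lt_irrefl _ h2
  refine ⟨n₀ - 1, ?_, ?_⟩
  · rw [hval]; congr 1; omega
  · have : n₀ - 1 + 2 = n₀ + 1 := by omega
    rw [this]; exact hn₀S

lemma d0_quad (u v w : G) :
    d0 V₀ h₀ (u * v * w) ≤ 2 * max (d0 V₀ h₀ u) (max (d0 V₀ h₀ v) (d0 V₀ h₀ w)) := by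
  set M := max (d0 V₀ h₀ u) (max (d0 V₀ h₀ v) (d0 V₀ h₀ w)) with hM
  have hu : d0 V₀ h₀ u ≤ M := le_max_left _ _
  have hv : d0 V₀ h₀ v ≤ M := le_max_of_le_right (le_max_left _ _)
  have hw : d0 V₀ h₀ w ≤ M := le_max_of_le_right (le_max_right _ _)
  rcases le_or_gt 2⁻¹ M with hM2 | hM2
  · calc d0 V₀ h₀ (u*v*w) ≤ 1 := d0_le_one V₀ h₀ _
    _ = 2 * 2⁻¹ := by norm_num
    _ ≤ 2 * M := by exact mul_le_mul_right hM2 2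
  rcases (show (0:ℝ≥0) ≤ M from zero_le).eq_or_lt with hM0 | hM0
  · -- M = 0 : everything is in all chains
    have hM0' : M = 0 := hM0.symm
    have hall : ∀ y : G, d0 V₀ h₀ y ≤ M → ∀ n, y ∈ (chain V₀ h₀ (n+1)).1 := fun y hy n =>
      (d0_eq_zero_iff V₀ h₀).1 (le_antisymm (hy.trans_eq hM0') zero_le) n
    have hprod : ∀ n, u * v * w ∈ (chain V₀ h₀ (n+1)).1 := fun n =>
      chain_cube V₀ h₀ (n+1) u (hall u hu (n+1)) v (hall v hv (n+1)) w (hall w hw (n+1))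
    rw [(d0_eq_zero_iff V₀ h₀).2 hprod]
    exact zero_le
  · -- 0 < M < 2⁻¹ : M is attained as one of the three values
    have hMval : ∃ y : G, d0 V₀ h₀ y = M := by
      rcases max_choice (d0 V₀ h₀ u) (max (d0 V₀ h₀ v) (d0 V₀ h₀ w)) with h1 | h1
      · exact ⟨u, h1.symm⟩
      · rcases max_choice (d0 V₀ h₀ v) (d0 V₀ h₀ w) with h2 | h2
        · exact ⟨v, by rw [hM, h1, h2]⟩
        · exact ⟨w, by rw [hM, h1, h2]⟩
    obtain ⟨y₀, hy₀⟩ := hMval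
    obtain ⟨m, hmv, -⟩ := d0_attained V₀ h₀ (z := y₀) (by rw [hy₀]; exact hM0) (by rw [hy₀]; exact hM2)
    have hMpow : M = 2⁻¹ ^ (m+2) := by rw [← hy₀, hmv]
    have hmem : ∀ y : G, d0 V₀ h₀ y ≤ M → y ∈ (chain V₀ h₀ (m+2)).1 := by
      intro y hy
      rcases (show (0:ℝ≥0) ≤ d0 V₀ h₀ y from zero_le).eq_or_lt with h0 | h0
      · exact d0_mem_of_lt V₀ h₀ (by rw [← h0]; exact pow_pos half_pos _)
      · obtain ⟨m', hm'val, hm'mem⟩ := d0_attained V₀ h₀ h0 (lt_of_le_of_lt hy hM2)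
        have hle : m + 2 ≤ m' + 2 := by
          by_contra hc
          push_neg at hc
          have hstrict : (2:ℝ≥0)⁻¹ ^ (m+2) < 2⁻¹ ^ (m'+2) :=
            pow_lt_pow_right_of_lt_one₀ half_pos half_lt_one hc
          rw [← hMpow, ← hm'val] at hstrict
          exact absurd (lt_of_le_of_lt hy hstrict) (lt_irrefl _)
        exact chain_anti V₀ h₀ hle hm'mem
    have hprod : u * v * w ∈ (chain V₀ h₀ (m+1)).1 :=
      chain_cube V₀ h₀ (m+1) u (hmem u hu) v (hmem v hv) w (hmem w hw)
    calc d0 V₀ h₀ (u*v*w) ≤ 2⁻¹ ^ (m+1) := d0_le_of_mem V₀ h₀ hprod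
    _ = 2 * M := by
        rw [hMpow, ← NNReal.coe_inj]
        push_cast
        ring

section Norm

variable (V₀ : Set G) (h₀ : Nice V₀)

noncomputable def pd : G → G → ℝ≥0 := fun x y => d0 V₀ h₀ (x⁻¹ * y)

lemma pd_self (x : G) : pd V₀ h₀ x x = 0 := by
  simp only [pd, inv_mul_cancel]
  exact d0_one V₀ h₀

lemma pd_comm (x y : G) : pd V₀ h₀ x y = pd V₀ h₀ y x := by
  unfold pd
  rw [← d0_inv V₀ h₀ (y⁻¹ * x)]
  congr 1
  group

noncomputable def PMS : PseudoMetricSpace G :=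
  PseudoMetricSpace.ofPreNNDist (pd V₀ h₀) (pd_self V₀ h₀) (pd_comm V₀ h₀)

noncomputable def D : G → G → ℝ := fun x y => @dist G (PMS V₀ h₀).toDist x y

lemma D_nonneg (x y : G) : 0 ≤ D V₀ h₀ x y := @dist_nonneg G (PMS V₀ h₀) x y

lemma D_self (x : G) : D V₀ h₀ x x = 0 := @dist_self G (PMS V₀ h₀) x

lemma D_comm (x y : G) : D V₀ h₀ x y = D V₀ h₀ y x := @dist_comm G (PMS V₀ h₀) x y

lemma D_triangle (x y z : G) : D V₀ h₀ x z ≤ D V₀ h₀ x y + D V₀ h₀ y z :=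
  @dist_triangle G (PMS V₀ h₀) x y z

lemma D_le_pd (x y : G) : D V₀ h₀ x y ≤ pd V₀ h₀ x y :=
  PseudoMetricSpace.dist_ofPreNNDist_le _ _ _ x y

lemma pd_quad (x₁ x₂ x₃ x₄ : G) : pd V₀ h₀ x₁ x₄ ≤
    2 * max (pd V₀ h₀ x₁ x₂) (max (pd V₀ h₀ x₂ x₃) (pd V₀ h₀ x₃ x₄)) := by
  have h : x₁⁻¹ * x₄ = (x₁⁻¹ * x₂) * (x₂⁻¹ * x₃) * (x₃⁻¹ * x₄) := by group
  unfold pd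
  rw [h]
  exact d0_quad V₀ h₀ _ _ _

lemma pd_le_two_D (x y : G) : (pd V₀ h₀ x y : ℝ) ≤ 2 * D V₀ h₀ x y :=
  PseudoMetricSpace.le_two_mul_dist_ofPreNNDist _ _ _ (pd_quad V₀ h₀) x y

lemma D_left_invariant (g x y : G) : D V₀ h₀ (g * x) (g * y) = D V₀ h₀ x y := by
  show @dist G (PMS V₀ h₀).toDist (g*x) (g*y) = @dist G (PMS V₀ h₀).toDist x y
  unfold PMS
  rw [PseudoMetricSpace.dist_ofPreNNDist, PseudoMetricSpace.dist_ofPreNNDist]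
  congr 1
  refine (Function.Surjective.iInf_congr (fun l : List G => l.map (fun a => g * a)) ?_ ?_).symm
  · intro l
    exact ⟨l.map (fun a => g⁻¹ * a), by simp [List.map_map, Function.comp_def]⟩
  · intro l
    show (List.zipWith (pd V₀ h₀) ((g*x) :: (l.map (fun a => g * a)))
        ((l.map (fun a => g * a)) ++ [g*y])).sum = _
    have h1 : (g * x) :: (l.map (fun a => g * a)) = (x :: l).map (fun a => g * a) := by
      simp
    have h2 : (l.map (fun a => g * a)) ++ [g * y] = (l ++ [y]).map (fun a => g * a) := by
      simp
    rw [h1, h2, List.zipWith_map]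
    have h3 : (fun (a b : G) => pd V₀ h₀ (g * a) (g * b)) = pd V₀ h₀ := by
      funext a b
      unfold pd
      congr 1
      group
    rw [h3]

/-- The group norm associated to the chain. -/
noncomputable def Nrm (z : G) : ℝ := D V₀ h₀ 1 z

lemma Nrm_nonneg (z : G) : 0 ≤ Nrm V₀ h₀ z := D_nonneg V₀ h₀ 1 z

lemma Nrm_one : Nrm V₀ h₀ (1:G) = 0 := D_self V₀ h₀ 1

lemma Nrm_mul (z w : G) : Nrm V₀ h₀ (z * w) ≤ Nrm V₀ h₀ z + Nrm V₀ h₀ w := by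
  have h := D_triangle V₀ h₀ 1 z (z * w)
  have h2 : D V₀ h₀ z (z * w) = Nrm V₀ h₀ w := by
    have := D_left_invariant V₀ h₀ z 1 w
    simpa [Nrm] using this
  rw [h2] at h
  exact h

lemma Nrm_inv (z : G) : Nrm V₀ h₀ z⁻¹ = Nrm V₀ h₀ z := by
  have h := D_left_invariant V₀ h₀ z 1 z⁻¹
  simp only [mul_one, mul_inv_cancel] at h
  unfold Nrm
  rw [← h, D_comm]

lemma Nrm_le_of_mem {z : G} {n : ℕ} (hz : z ∈ (chain V₀ h₀ (n+1)).1) :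
    Nrm V₀ h₀ z ≤ ((2:ℝ)⁻¹) ^ (n+1) := by
  have h1 : Nrm V₀ h₀ z ≤ (pd V₀ h₀ 1 z : ℝ) := D_le_pd V₀ h₀ 1 z
  have h2 : pd V₀ h₀ 1 z = d0 V₀ h₀ z := by simp [pd]
  have h3 : d0 V₀ h₀ z ≤ 2⁻¹ ^ (n+1) := d0_le_of_mem V₀ h₀ hz
  calc Nrm V₀ h₀ z ≤ (d0 V₀ h₀ z : ℝ) := by rw [← h2]; exact h1
  _ ≤ ((2⁻¹ : ℝ≥0) ^ (n+1) : ℝ≥0) := by exact_mod_cast h3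
  _ = ((2:ℝ)⁻¹) ^ (n+1) := by push_cast; norm_num

lemma mem_of_Nrm_lt {z : G} {n : ℕ} (hz : Nrm V₀ h₀ z < ((2:ℝ)⁻¹) ^ (n+2)) :
    z ∈ (chain V₀ h₀ (n+1)).1 := by
  refine d0_mem_of_lt V₀ h₀ ?_
  have h1 : (pd V₀ h₀ 1 z : ℝ) ≤ 2 * Nrm V₀ h₀ z := pd_le_two_D V₀ h₀ 1 z
  have h2 : pd V₀ h₀ 1 z = d0 V₀ h₀ z := by simp [pd]
  have h3 : (d0 V₀ h₀ z : ℝ) < 2 * ((2:ℝ)⁻¹) ^ (n+2) := by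
    rw [← h2]
    exact lt_of_le_of_lt h1 (by linarith)
  have h4 : 2 * ((2:ℝ)⁻¹) ^ (n+2) = ((2:ℝ)⁻¹) ^ (n+1) := by ring
  rw [h4] at h3
  have h5 : (((2:ℝ≥0)⁻¹) ^ (n+1) : ℝ) = ((2:ℝ)⁻¹) ^ (n+1) := by push_cast; norm_num
  rw [← h5] at h3
  exact_mod_cast h3

lemma Nrm_mem_V₀ {z : G} (hz : Nrm V₀ h₀ z < ((2:ℝ)⁻¹) ^ 2) : z ∈ V₀ := by
  have h := mem_of_Nrm_lt V₀ h₀ (n := 0) hz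
  exact chain_anti V₀ h₀ (Nat.zero_le 1) h

end Norm

/-! ### Bump functions -/

noncomputable def beta (t : ℝ) : ℝ := max 0 (1 - |t|)

lemma beta_nonneg (t : ℝ) : 0 ≤ beta t := le_max_left _ _

lemma beta_le_one (t : ℝ) : beta t ≤ 1 := by
  unfold beta
  have := abs_nonneg t
  apply max_le <;> linarith

lemma beta_lip (t s : ℝ) : |beta t - beta s| ≤ |t - s| := by
  unfold beta
  have h := abs_max_sub_max_le_abs (1 - |t|) (1 - |s|) 0
  rw [max_comm (1 - |t|) 0, max_comm (1 - |s|) 0] at h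
  refine h.trans ?_
  have h2 : |1 - |t| - (1 - |s|)| = |(|s| - |t|)| := by ring_nf
  rw [h2]
  calc |(|s| - |t|)| ≤ |s - t| := abs_abs_sub_abs_le_abs_sub s t
  _ = |t - s| := abs_sub_comm s t

lemma beta_pos_iff (t : ℝ) : 0 < beta t ↔ |t| < 1 := by
  unfold beta
  rw [lt_max_iff]
  constructor
  · rintro (h | h) <;> [exact absurd h (lt_irrefl _); linarith]
  · intro h; right; linarith

lemma beta_ge_half {t : ℝ} (h : |t| ≤ 1/2) : 1/2 ≤ beta t := by
  unfold beta
  rw [le_max_iff]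
  right; linarith

lemma beta_zero : beta 0 = 1 := by simp [beta]

section Bump

variable (W₃ : Set G) (V₀ : Set G) (h₀ : Nice V₀) (x : G)

noncomputable def dA (g : G) : ℝ :=
  sInf ((fun y => Nrm V₀ h₀ (y⁻¹ * g)) '' ((fun w => w * x) '' W₃))

noncomputable def lam (g : G) : ℝ := max 0 (1 - 16 * dA W₃ V₀ h₀ x g)

lemma dA_set_nonempty (hW₃1 : (1:G) ∈ W₃) (g : G) :
    ((fun y => Nrm V₀ h₀ (y⁻¹ * g)) '' ((fun w => w * x) '' W₃)).Nonempty :=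
  ⟨_, Set.mem_image_of_mem _ (Set.mem_image_of_mem _ hW₃1)⟩

lemma dA_bddBelow (g : G) :
    BddBelow ((fun y => Nrm V₀ h₀ (y⁻¹ * g)) '' ((fun w => w * x) '' W₃)) := by
  refine ⟨0, ?_⟩
  rintro r ⟨y, -, rfl⟩
  exact Nrm_nonneg V₀ h₀ _

lemma dA_nonneg (hW₃1 : (1:G) ∈ W₃) (g : G) : 0 ≤ dA W₃ V₀ h₀ x g := by
  refine le_csInf (dA_set_nonempty W₃ V₀ h₀ x hW₃1 g) ?_
  rintro r ⟨y, -, rfl⟩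
  exact Nrm_nonneg V₀ h₀ _

lemma dA_le {w : G} (g : G) (hw : w ∈ W₃) :
    dA W₃ V₀ h₀ x g ≤ Nrm V₀ h₀ ((w * x)⁻¹ * g) :=
  csInf_le (dA_bddBelow W₃ V₀ h₀ x g)
    (Set.mem_image_of_mem _ (Set.mem_image_of_mem _ hw))

lemma dA_lip (hW₃1 : (1:G) ∈ W₃) (a b : G) :
    dA W₃ V₀ h₀ x b ≤ dA W₃ V₀ h₀ x a + Nrm V₀ h₀ (a⁻¹ * b) := by
  rw [← sub_le_iff_le_add]
  refine le_csInf (dA_set_nonempty W₃ V₀ h₀ x hW₃1 a) ?_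
  rintro r ⟨y, hy, rfl⟩
  have h1 : dA W₃ V₀ h₀ x b ≤ Nrm V₀ h₀ (y⁻¹ * b) := by
    obtain ⟨w, hw, rfl⟩ := hy
    exact dA_le W₃ V₀ h₀ x b hw
  have h2 : Nrm V₀ h₀ (y⁻¹ * b) ≤ Nrm V₀ h₀ (y⁻¹ * a) + Nrm V₀ h₀ (a⁻¹ * b) := by
    have h3 := Nrm_mul V₀ h₀ (y⁻¹ * a) (a⁻¹ * b)
    have heq : y⁻¹ * a * (a⁻¹ * b) = y⁻¹ * b := by group
    rwa [heq] at h3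
  linarith

lemma lam_nonneg (g : G) : 0 ≤ lam W₃ V₀ h₀ x g := le_max_left _ _

lemma lam_le_one (hW₃1 : (1:G) ∈ W₃) (g : G) : lam W₃ V₀ h₀ x g ≤ 1 := by
  have h1 := dA_nonneg W₃ V₀ h₀ x hW₃1 g
  unfold lam
  apply max_le <;> linarith

lemma lam_eq_one {w : G} (hw : w ∈ W₃) (hW₃1 : (1:G) ∈ W₃) :
    lam W₃ V₀ h₀ x (w * x) = 1 := by
  have h1 := dA_le W₃ V₀ h₀ x (w * x) hw
  rw [show (w * x)⁻¹ * (w * x) = 1 by group, Nrm_one] at h1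
  have h2 := dA_nonneg W₃ V₀ h₀ x hW₃1 (w * x)
  have h3 : dA W₃ V₀ h₀ x (w * x) = 0 := le_antisymm h1 h2
  unfold lam
  rw [h3]
  norm_num

lemma lam_lip (hW₃1 : (1:G) ∈ W₃) (a b : G) :
    |lam W₃ V₀ h₀ x a - lam W₃ V₀ h₀ x b| ≤ 16 * Nrm V₀ h₀ (a⁻¹ * b) := by
  unfold lam
  have h := abs_max_sub_max_le_abs (1 - 16 * dA W₃ V₀ h₀ x a) (1 - 16 * dA W₃ V₀ h₀ x b) 0
  rw [max_comm _ (0:ℝ), max_comm (1 - 16 * dA W₃ V₀ h₀ x b) (0:ℝ)] at h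
  refine h.trans ?_
  have h1 := dA_lip W₃ V₀ h₀ x hW₃1 a b
  have h2 := dA_lip W₃ V₀ h₀ x hW₃1 b a
  have h3 : Nrm V₀ h₀ (b⁻¹ * a) = Nrm V₀ h₀ (a⁻¹ * b) := by
    rw [← Nrm_inv V₀ h₀ (a⁻¹ * b)]
    congr 1
    group
  rw [h3] at h2
  rw [abs_le]
  constructor <;> [nlinarith; nlinarith]

lemma lam_pos (hW₃1 : (1:G) ∈ W₃) {g : G} (hg : 0 < lam W₃ V₀ h₀ x g) :
    ∃ w ∈ W₃, (w * x)⁻¹ * g ∈ V₀ := by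
  have h1 : dA W₃ V₀ h₀ x g < 16⁻¹ := by
    unfold lam at hg
    rw [lt_max_iff] at hg
    rcases hg with h | h
    · exact absurd h (lt_irrefl _)
    · nlinarith
  obtain ⟨r, hr, hrlt⟩ := exists_lt_of_csInf_lt (dA_set_nonempty W₃ V₀ h₀ x hW₃1 g) h1
  obtain ⟨y, ⟨w, hw, rfl⟩, rfl⟩ := hr
  refine ⟨w, hw, Nrm_mem_V₀ V₀ h₀ ?_⟩
  refine lt_trans hrlt ?_
  norm_num

end Bump

section KK

lemma mul_diff_le {a a' b b' : ℝ} (ha : 0 ≤ a) (ha1 : a ≤ 1) (ha' : 0 ≤ a') (ha1' : a' ≤ 1)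
    (hb : 0 ≤ b) (hb1 : b ≤ 1) (hb' : 0 ≤ b') (hb1' : b' ≤ 1) :
    a * b - a' * b' ≤ |a - a'| + |b - b'| := by
  have h1 := le_abs_self (a - a')
  have h2 := le_abs_self (b - b')
  calc a * b - a' * b' = (a - a') * b + a' * (b - b') := by ring
  _ ≤ |a - a'| * b + a' * |b - b'| :=
      add_le_add (mul_le_mul_of_nonneg_right h1 hb) (mul_le_mul_of_nonneg_left h2 ha')
  _ ≤ |a - a'| * 1 + 1 * |b - b'| :=
      add_le_add (mul_le_mul_of_nonneg_left hb1 (abs_nonneg _))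
        (mul_le_mul_of_nonneg_right ha1' (abs_nonneg _))
  _ = |a - a'| + |b - b'| := by ring

variable {H : Subgroup G} (ψ : H → ℝ) (W₃ V₀ : Set G) (hV : Nice V₀) (x : G)

noncomputable def kk (g : G) (t : ℝ) : ℝ :=
  ⨆ h : H, lam W₃ V₀ hV x ((h : G) * g) * beta (t + ψ h)

lemma kk_bdd (hW₃1 : (1:G) ∈ W₃) (g : G) (t : ℝ) :
    BddAbove (Set.range fun h : H => lam W₃ V₀ hV x ((h : G) * g) * beta (t + ψ h)) := by
  refine ⟨1, ?_⟩
  rintro r ⟨h, rfl⟩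
  exact mul_le_one₀ (lam_le_one W₃ V₀ hV x hW₃1 _) (beta_nonneg _) (beta_le_one _)

lemma kk_le_elt (hW₃1 : (1:G) ∈ W₃) (g : G) (t : ℝ) (h : H) :
    lam W₃ V₀ hV x ((h : G) * g) * beta (t + ψ h) ≤ kk ψ W₃ V₀ hV x g t :=
  le_ciSup (kk_bdd ψ W₃ V₀ hV x hW₃1 g t) h

lemma kk_nonneg (hW₃1 : (1:G) ∈ W₃) (g : G) (t : ℝ) : 0 ≤ kk ψ W₃ V₀ hV x g t :=
  le_trans (mul_nonneg (lam_nonneg W₃ V₀ hV x _) (beta_nonneg _))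
    (kk_le_elt ψ W₃ V₀ hV x hW₃1 g t 1)

lemma kk_le_one (hW₃1 : (1:G) ∈ W₃) (g : G) (t : ℝ) : kk ψ W₃ V₀ hV x g t ≤ 1 :=
  ciSup_le fun h => mul_le_one₀ (lam_le_one W₃ V₀ hV x hW₃1 _) (beta_nonneg _) (beta_le_one _)

lemma kk_diff (hW₃1 : (1:G) ∈ W₃) (g g' : G) (t t' : ℝ) :
    kk ψ W₃ V₀ hV x g t - kk ψ W₃ V₀ hV x g' t' ≤ 16 * Nrm V₀ hV (g⁻¹ * g') + |t - t'| := by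
  rw [sub_le_iff_le_add]
  refine ciSup_le fun h => ?_
  have key : lam W₃ V₀ hV x ((h : G) * g) * beta (t + ψ h) ≤
      lam W₃ V₀ hV x ((h : G) * g') * beta (t' + ψ h) + (16 * Nrm V₀ hV (g⁻¹ * g') + |t - t'|) := by
    have hlip := lam_lip W₃ V₀ hV x hW₃1 ((h : G) * g) ((h : G) * g')
    rw [show ((h:G) * g)⁻¹ * ((h:G) * g') = g⁻¹ * g' by group] at hlip
    have hblip := beta_lip (t + ψ h) (t' + ψ h)
    rw [show t + ψ h - (t' + ψ h) = t - t' by ring] at hblip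
    have hd := mul_diff_le (lam_nonneg W₃ V₀ hV x ((h:G)*g)) (lam_le_one W₃ V₀ hV x hW₃1 _)
      (lam_nonneg W₃ V₀ hV x ((h:G)*g')) (lam_le_one W₃ V₀ hV x hW₃1 _)
      (beta_nonneg _) (beta_le_one _) (beta_nonneg _) (beta_le_one _)
      (b := beta (t + ψ h)) (b' := beta (t' + ψ h))
    linarith [abs_le.1 hlip, abs_le.1 hblip, hd]
  exact key.trans (by
    have := kk_le_elt ψ W₃ V₀ hV x hW₃1 g' t' h
    linarith)

lemma kk_pos (hW₃1 : (1:G) ∈ W₃) {g : G} {t : ℝ} (hk : 0 < kk ψ W₃ V₀ hV x g t) :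
    ∃ h : H, 0 < lam W₃ V₀ hV x ((h : G) * g) ∧ |t + ψ h| < 1 := by
  by_contra hc
  push_neg at hc
  have : kk ψ W₃ V₀ hV x g t ≤ 0 := by
    refine ciSup_le fun h => ?_
    rcases le_or_gt (lam W₃ V₀ hV x ((h : G) * g)) 0 with hl | hl
    · exact mul_nonpos_of_nonpos_of_nonneg hl (beta_nonneg _)
    · have h1 := hc h hl
      have h2 : beta (t + ψ h) = 0 := by
        have := beta_pos_iff (t + ψ h)
        rcases (beta_nonneg (t + ψ h)).eq_or_lt with h3 | h3
        · exact h3.symm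
        · exact absurd (this.1 h3) (not_lt.2 h1)
      rw [h2, mul_zero]
  exact absurd (lt_of_lt_of_le hk this) (lt_irrefl _)

lemma kk_inv (hψ : ∀ a b : H, ψ (a * b) = ψ a + ψ b) (h₀ : H) (g : G) (t : ℝ) :
    kk ψ W₃ V₀ hV x ((h₀ : G) * g) t = kk ψ W₃ V₀ hV x g (t - ψ h₀) := by
  have hψ1 : ψ 1 = 0 := by have := hψ 1 1; simpa using this
  have hψi : ∀ a : H, ψ a⁻¹ = - ψ a := fun a => by
    have := hψ a a⁻¹
    simp only [mul_inv_cancel, hψ1] at this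
    linarith
  unfold kk
  refine congrArg sSup (Set.ext fun r => ?_)
  simp only [Set.mem_range]
  constructor
  · rintro ⟨h, rfl⟩
    refine ⟨h * h₀, ?_⟩
    have e1 : ((h * h₀ : H) : G) * g = (h : G) * ((h₀ : G) * g) := by push_cast; group
    rw [e1, hψ]
    congr 1
    ring
  · rintro ⟨h, rfl⟩
    refine ⟨h * h₀⁻¹, ?_⟩
    have e1 : ((h * h₀⁻¹ : H) : G) * ((h₀ : G) * g) = (h : G) * g := by push_cast; group
    rw [e1, hψ, hψi]
    congr 1
    ring

end KK

lemma intDiff {f g : ℝ → ℝ} (hf : Integrable f volume) (hg : Integrable g volume) {R C : ℝ}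
    (hR : 0 ≤ R) (hsupp : ∀ t, t ∉ Icc (-R) R → f t = g t)
    (hbound : ∀ t ∈ Icc (-R) R, |f t - g t| ≤ C) :
    |(∫ t, f t) - ∫ t, g t| ≤ C * (2 * R) := by
  rw [← integral_sub hf hg]
  have heq : (fun t => f t - g t) = Set.indicator (Icc (-R) R) (fun t => f t - g t) := by
    funext t
    by_cases ht : t ∈ Icc (-R) R
    · rw [Set.indicator_of_mem ht]
    · rw [Set.indicator_of_notMem ht, hsupp t ht, sub_self]
  rw [heq, integral_indicator measurableSet_Icc]
  have hm : AEStronglyMeasurable (fun t => f t - g t) (volume.restrict (Icc (-R) R)) :=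
    ((hf.sub hg).aestronglyMeasurable).restrict
  have h1 := norm_setIntegral_le_of_norm_le_const (μ := volume) (s := Icc (-R) R) (C := C)
    measure_Icc_lt_top (fun t ht => by rw [Real.norm_eq_abs]; exact hbound t ht)
  rw [Real.norm_eq_abs] at h1
  refine h1.trans ?_
  rw [Real.volume_real_Icc_of_le (by linarith)]
  apply le_of_eq
  ring

theorem key (H : Subgroup G) [CompactSpace (G ⧸ H)] (ψ : H → ℝ)
    (hψ : ∀ a b : H, ψ (a * b) = ψ a + ψ b) (hψc : Continuous ψ) :
    ∃ F : G → ℝ, Continuous F ∧ F 1 = 0 ∧ ∀ (h : H) (g : G), F ((h : G) * g) = ψ h + F g := by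
  classical
  have hψ1 : ψ 1 = 0 := by have := hψ 1 1; simpa using this
  have hψi : ∀ a : H, ψ a⁻¹ = -ψ a := fun a => by
    have := hψ a a⁻¹
    simp only [mul_inv_cancel, hψ1] at this
    linarith
  -- Step 1 : the neighborhood W₀ where ψ is bounded by 1
  obtain ⟨W₀, hW₀o, hW₀1, hW₀ψ⟩ :
      ∃ W₀ : Set G, IsOpen W₀ ∧ (1:G) ∈ W₀ ∧ ∀ h : H, (h:G) ∈ W₀ → |ψ h| ≤ 1 := by
    have h1 : ψ ⁻¹' (Set.Ioo (-1) 1) ∈ 𝓝 (1 : H) := by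
      apply hψc.continuousAt.preimage_mem_nhds
      rw [hψ1]
      exact isOpen_Ioo.mem_nhds (by norm_num)
    rw [show (1 : ↥H) = ⟨(1:G), one_mem H⟩ from rfl, nhds_subtype_eq_comap, Filter.mem_comap] at h1
    obtain ⟨U, hU, hUsub⟩ := h1
    obtain ⟨W₀, hWU, hWo, hW1⟩ := mem_nhds_iff.1 hU
    refine ⟨W₀, hWo, hW1, fun h hh => ?_⟩
    have h2 : h ∈ ψ ⁻¹' (Set.Ioo (-1) 1) := by
      apply hUsub
      exact hWU hh
    obtain ⟨hl, hr⟩ := h2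
    rw [abs_le]
    constructor <;> linarith
  -- Step 2 : W₃ with W₃*W₃*W₃ ⊆ W₀, symmetric
  obtain ⟨W₃, hW₃n, hW₃cube⟩ := exists_symm_cube hW₀o hW₀1
  obtain ⟨hW₃o, hW₃1, hW₃inv⟩ := hW₃n
  -- Step 3 : the finite covering
  obtain ⟨T, hT⟩ : ∃ T : Finset G, ∀ γ : G, ∃ x ∈ T, ∃ h : H, ∃ w ∈ W₃, (h:G) * γ = w * x := by
    have hUo : ∀ x : G, IsOpen (QuotientGroup.mk (s := H) '' ((fun w => x⁻¹ * w) '' W₃)) :=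
      fun x => QuotientGroup.isOpenMap_coe _ ((Homeomorph.mulLeft x⁻¹).isOpenMap _ hW₃o)
    have hcov : (Set.univ : Set (G ⧸ H)) ⊆
        ⋃ x : G, QuotientGroup.mk '' ((fun w => x⁻¹ * w) '' W₃) := by
      rintro q -
      obtain ⟨g, rfl⟩ := QuotientGroup.mk_surjective q
      refine Set.mem_iUnion.2 ⟨g⁻¹, ?_⟩
      exact ⟨g, ⟨1, hW₃1, by simp⟩, rfl⟩
    obtain ⟨T, hTcov⟩ := isCompact_univ.elim_finite_subcover _ hUo hcov
    refine ⟨T, fun γ => ?_⟩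
    have h3 := hTcov (Set.mem_univ (QuotientGroup.mk γ⁻¹))
    rw [Set.mem_iUnion₂] at h3
    obtain ⟨x, hxT, hq⟩ := h3
    obtain ⟨z, ⟨w, hw, rfl⟩, hz⟩ := hq
    rw [QuotientGroup.eq] at hz
    refine ⟨x, hxT, ⟨_, hz⟩, w⁻¹, hW₃inv w hw, ?_⟩
    show ((x⁻¹ * w)⁻¹ * γ⁻¹) * γ = w⁻¹ * x
    group
  have hTne : T.Nonempty := by obtain ⟨x, hx, -⟩ := hT 1; exact ⟨x, hx⟩
  -- Step 4 : W₂ and V₀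
  set W₂ : Set G := W₃ ∩ ⋂ x ∈ T, (fun z => x * z * x⁻¹) ⁻¹' W₃ with hW₂def
  have hW₂o : IsOpen W₂ := hW₃o.inter (isOpen_biInter_finset fun x _ =>
    hW₃o.preimage ((continuous_const.mul continuous_id).mul continuous_const))
  have hW₂1 : (1:G) ∈ W₂ := ⟨hW₃1, Set.mem_iInter₂.2 fun x _ => by simpa using hW₃1⟩
  obtain ⟨V₁, hV₁n, hV₁cube⟩ := exists_symm_cube hW₂o hW₂1
  obtain ⟨V₀, hV₀n, hV₀cube⟩ := exists_symm_cube hV₁n.1 hV₁n.2.1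
  have hV₀1 : (1:G) ∈ V₀ := hV₀n.2.1
  have hV₀inv : ∀ v ∈ V₀, v⁻¹ ∈ V₀ := hV₀n.2.2
  have hV₀subV₁ : V₀ ⊆ V₁ := fun a ha => by
    have := hV₀cube a ha 1 hV₀1 1 hV₀1; simpa using this
  have hP4 : ∀ a ∈ V₀, ∀ b ∈ V₀, ∀ c ∈ V₀, ∀ d ∈ V₀, a * b * c * d ∈ W₂ := by
    intro a ha b hb c hc d hd
    have h1 : a * b * c ∈ V₁ := hV₀cube a ha b hb c hc
    have h2 := hV₁cube _ h1 _ (hV₀subV₁ hd) 1 hV₁n.2.1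
    simpa using h2
  -- Step 5 : the support lemma
  have hSUPP : ∀ x ∈ T, ∀ a b u₁ u₂ : G, u₁ ∈ V₀ → u₂ ∈ V₀ →
      0 < lam W₃ V₀ hV₀n x a → 0 < lam W₃ V₀ hV₀n x b → a * (u₁ * u₂) * b⁻¹ ∈ W₀ := by
    intro x hxT a b u₁ u₂ hu₁ hu₂ hla hlb
    obtain ⟨wa, hwa, hva⟩ := lam_pos W₃ V₀ hV₀n x hW₃1 hla
    obtain ⟨wb, hwb, hvb⟩ := lam_pos W₃ V₀ hV₀n x hW₃1 hlb
    have hinner4 : ((wa * x)⁻¹ * a) * u₁ * u₂ * ((wb * x)⁻¹ * b)⁻¹ ∈ W₂ :=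
      hP4 _ hva _ hu₁ _ hu₂ _ (hV₀inv _ hvb)
    have hinner : x * (((wa * x)⁻¹ * a) * u₁ * u₂ * ((wb * x)⁻¹ * b)⁻¹) * x⁻¹ ∈ W₃ := by
      have h5 := hinner4.2
      rw [Set.mem_iInter₂] at h5
      exact h5 x hxT
    have htotal := hW₃cube _ hwa _ hinner _ (hW₃inv _ hwb)
    have heq : wa * (x * (((wa * x)⁻¹ * a) * u₁ * u₂ * ((wb * x)⁻¹ * b)⁻¹) * x⁻¹) * wb⁻¹ =
        a * (u₁ * u₂) * b⁻¹ := by group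
    rwa [heq] at htotal
  -- Step 6 : difference of ψ values on overlapping translates
  have hPSI : ∀ x ∈ T, ∀ (g u₁ u₂ : G), u₁ ∈ V₀ → u₂ ∈ V₀ →
      ∀ h h' : H, 0 < lam W₃ V₀ hV₀n x ((h:G) * g) →
      0 < lam W₃ V₀ hV₀n x ((h':G) * (g * (u₁ * u₂))) → |ψ h - ψ h'| ≤ 1 := by
    intro x hxT g u₁ u₂ hu₁ hu₂ h h' hla hlb
    have hmem := hSUPP x hxT _ _ u₁ u₂ hu₁ hu₂ hla hlb
    have heq : ((h:G) * g) * (u₁ * u₂) * ((h':G) * (g * (u₁ * u₂)))⁻¹ = ((h * h'⁻¹ : H) : G) := by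
      push_cast
      group
    rw [heq] at hmem
    have h1 := hW₀ψ _ hmem
    have h2 : ψ (h * h'⁻¹) = ψ h - ψ h' := by rw [hψ, hψi]; ring
    rwa [h2] at h1
  -- Step 7 : t-Lipschitz continuity of kk
  have hkt : ∀ (x : G) (g : G) (t t' : ℝ),
      |kk ψ W₃ V₀ hV₀n x g t - kk ψ W₃ V₀ hV₀n x g t'| ≤ |t - t'| := by
    intro x g t t'
    have h1 := kk_diff ψ W₃ V₀ hV₀n x hW₃1 g g t t'
    have h2 := kk_diff ψ W₃ V₀ hV₀n x hW₃1 g g t' t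
    rw [show g⁻¹ * g = 1 from inv_mul_cancel g, Nrm_one] at h1 h2
    rw [abs_sub_comm t' t] at h2
    rw [abs_le]
    constructor <;> linarith
  have hkkcont_t : ∀ (x : G) (g : G), Continuous fun t => kk ψ W₃ V₀ hV₀n x g t := by
    intro x g
    refine (LipschitzWith.of_dist_le_mul (K := 1) fun t t' => ?_).continuous
    rw [Real.dist_eq, Real.dist_eq, NNReal.coe_one, one_mul]
    exact hkt x g t t'
  -- Step 8 : g-variation bound for kk
  have hkg : ∀ (x : G) (g g' : G) (t : ℝ),
      |kk ψ W₃ V₀ hV₀n x g t - kk ψ W₃ V₀ hV₀n x g' t| ≤ 16 * Nrm V₀ hV₀n (g⁻¹ * g') := by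
    intro x g g' t
    have h1 := kk_diff ψ W₃ V₀ hV₀n x hW₃1 g g' t t
    have h2 := kk_diff ψ W₃ V₀ hV₀n x hW₃1 g' g t t
    have h3 : Nrm V₀ hV₀n (g'⁻¹ * g) = Nrm V₀ hV₀n (g⁻¹ * g') := by
      rw [← Nrm_inv V₀ hV₀n (g⁻¹ * g')]; congr 1; group
    rw [h3] at h2
    simp only [sub_self, abs_zero, add_zero] at h1 h2
    rw [abs_le]
    constructor <;> linarith
  -- Step 9 : support diameter
  have hdiam2 : ∀ x ∈ T, ∀ (g v₁ v₂ : G), v₁ ∈ V₀ → v₂ ∈ V₀ → ∀ t t' : ℝ,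
      0 < kk ψ W₃ V₀ hV₀n x g t → 0 < kk ψ W₃ V₀ hV₀n x (g * (v₁ * v₂)) t' → |t - t'| ≤ 3 := by
    intro x hxT g v₁ v₂ hv₁ hv₂ t t' hk hk'
    obtain ⟨h, hl, hb⟩ := kk_pos ψ W₃ V₀ hV₀n x hW₃1 hk
    obtain ⟨h', hl', hb'⟩ := kk_pos ψ W₃ V₀ hV₀n x hW₃1 hk'
    have hps := hPSI x hxT g v₁ v₂ hv₁ hv₂ h h' hl hl'
    have e1 := abs_le.1 hb.le
    have e2 := abs_le.1 hb'.le
    have e3 := abs_le.1 hps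
    rw [abs_le]
    constructor <;> linarith
  have hdiam : ∀ x ∈ T, ∀ (g : G) (t t' : ℝ),
      0 < kk ψ W₃ V₀ hV₀n x g t → 0 < kk ψ W₃ V₀ hV₀n x g t' → |t - t'| ≤ 3 := by
    intro x hxT g t t' hk hk'
    have := hdiam2 x hxT g 1 1 hV₀1 hV₀1 t t' hk (by simpa using hk')
    exact this
  -- Step 10 : integrability
  have hIntAux : ∀ x ∈ T, ∀ g : G, Integrable (fun t => kk ψ W₃ V₀ hV₀n x g t) volume ∧
      Integrable (fun t => t * kk ψ W₃ V₀ hV₀n x g t) volume := by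
    intro x hxT g
    by_cases hex : ∃ t₀, 0 < kk ψ W₃ V₀ hV₀n x g t₀
    · obtain ⟨t₀, ht₀⟩ := hex
      have hzero : ∀ t ∉ Icc (t₀ - 3) (t₀ + 3), kk ψ W₃ V₀ hV₀n x g t = 0 := by
        intro t ht
        by_contra hne
        have hpos : 0 < kk ψ W₃ V₀ hV₀n x g t :=
          lt_of_le_of_ne (kk_nonneg ψ W₃ V₀ hV₀n x hW₃1 g t) (Ne.symm hne)
        have h5 := abs_le.1 (hdiam x hxT g t t₀ hpos ht₀)
        exact ht ⟨by linarith [h5.2], by linarith [h5.1]⟩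
      have hcs : HasCompactSupport (fun t => kk ψ W₃ V₀ hV₀n x g t) :=
        HasCompactSupport.intro isCompact_Icc hzero
      have hcs2 : HasCompactSupport (fun t => t * kk ψ W₃ V₀ hV₀n x g t) :=
        HasCompactSupport.intro isCompact_Icc fun t ht => by rw [hzero t ht, mul_zero]
      exact ⟨(hkkcont_t x g).integrable_of_hasCompactSupport hcs,
        (continuous_id.mul (hkkcont_t x g)).integrable_of_hasCompactSupport hcs2⟩
    · push_neg at hex
      have h0 : ∀ t, kk ψ W₃ V₀ hV₀n x g t = 0 := fun t =>
        le_antisymm (hex t) (kk_nonneg ψ W₃ V₀ hV₀n x hW₃1 g t)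
      constructor
      · have : (fun t => kk ψ W₃ V₀ hV₀n x g t) = fun _ => (0:ℝ) := funext h0
        rw [this]; exact integrable_zero _ _ _
      · have : (fun t => t * kk ψ W₃ V₀ hV₀n x g t) = fun _ => (0:ℝ) := by
          funext t; rw [h0 t, mul_zero]
        rw [this]; exact integrable_zero _ _ _
  -- Step 11 : the total kernel and its integrals
  set k : G → ℝ → ℝ := fun g t => ∑ x ∈ T, kk ψ W₃ V₀ hV₀n x g t with hkdef
  have hkint : ∀ g, Integrable (fun t => k g t) volume := fun g =>
    integrable_finset_sum T fun x hx => (hIntAux x hx g).1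
  have hktint : ∀ g, Integrable (fun t => t * k g t) volume := by
    intro g
    have : (fun t => t * k g t) = fun t => ∑ x ∈ T, t * kk ψ W₃ V₀ hV₀n x g t := by
      funext t; rw [hkdef]; simp [Finset.mul_sum]
    rw [this]
    exact integrable_finset_sum T fun x hx => (hIntAux x hx g).2
  have hknn : ∀ g t, 0 ≤ k g t := fun g t =>
    Finset.sum_nonneg fun x hx => kk_nonneg ψ W₃ V₀ hV₀n x hW₃1 g t
  have hkzero_iff : ∀ g t, k g t ≠ 0 → ∃ x ∈ T, kk ψ W₃ V₀ hV₀n x g t ≠ 0 := by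
    intro g t hne
    by_contra hc
    push_neg at hc
    exact hne (Finset.sum_eq_zero hc)
  set IF : G → ℝ := fun g => ∫ t, k g t with hIFdef
  set EF : G → ℝ := fun g => ∫ t, t * k g t with hEFdef
  -- Step 12 : lower bound for IF
  have hI_half : ∀ g, 1/2 ≤ IF g := by
    intro g
    obtain ⟨x, hxT, h, w, hw, hwx⟩ := hT g
    have hlam1 : lam W₃ V₀ hV₀n x ((h:G) * g) = 1 := by
      rw [hwx]; exact lam_eq_one W₃ V₀ hV₀n x hw hW₃1
    have hklow : ∀ t, beta (t + ψ h) ≤ k g t := by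
      intro t
      have h1 := kk_le_elt ψ W₃ V₀ hV₀n x hW₃1 g t h
      rw [hlam1, one_mul] at h1
      have h2 : kk ψ W₃ V₀ hV₀n x g t ≤ k g t :=
        Finset.single_le_sum (fun y _ => kk_nonneg ψ W₃ V₀ hV₀n y hW₃1 g t) hxT
      linarith
    have h3 : ∫ t in Icc (-ψ h - 1/2) (-ψ h + 1/2), (1/2 : ℝ) ≤
        ∫ t in Icc (-ψ h - 1/2) (-ψ h + 1/2), k g t := by
      refine setIntegral_mono_on (by
          exact integrableOn_const measure_Icc_lt_top.ne) ((hkint g).integrableOn) measurableSet_Icc ?_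
      intro t ht
      refine le_trans (beta_ge_half ?_) (hklow t)
      rw [abs_le]
      constructor <;> [linarith [ht.1]; linarith [ht.2]]
    have h4 : ∫ t in Icc (-ψ h - 1/2) (-ψ h + 1/2), k g t ≤ IF g :=
      setIntegral_le_integral (hkint g) (Filter.Eventually.of_forall (hknn g))
    have h5 : ∫ t in Icc (-ψ h - 1/2) (-ψ h + 1/2), (1/2 : ℝ) = 1/2 := by
      rw [setIntegral_const, Real.volume_real_Icc, smul_eq_mul]
      rw [show -ψ h + 1/2 - (-ψ h - 1/2) = 1 by ring]
      simp
    linarith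
  have hI_pos : ∀ g, 0 < IF g := fun g => lt_of_lt_of_le one_half_pos (hI_half g)
  -- Step 13 : local uniform support bound
  have hlocR : ∀ g₀ : G, ∃ R : ℝ, 0 < R ∧ ∀ x ∈ T, ∀ (g : G) (t : ℝ),
      g₀⁻¹ * g ∈ V₀ → kk ψ W₃ V₀ hV₀n x g t ≠ 0 → |t| ≤ R := by
    intro g₀
    have hxR : ∀ x ∈ T, ∃ Rx : ℝ, ∀ (g : G) (t : ℝ),
        g₀⁻¹ * g ∈ V₀ → kk ψ W₃ V₀ hV₀n x g t ≠ 0 → |t| ≤ Rx := by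
      intro x hxT
      by_cases hex : ∃ g' t', g₀⁻¹ * g' ∈ V₀ ∧ 0 < kk ψ W₃ V₀ hV₀n x g' t'
      · obtain ⟨g', t', hv', hk'⟩ := hex
        refine ⟨|t'| + 3, fun g t hv hk => ?_⟩
        have hkpos : 0 < kk ψ W₃ V₀ hV₀n x g t :=
          lt_of_le_of_ne (kk_nonneg ψ W₃ V₀ hV₀n x hW₃1 g t) (Ne.symm hk)
        have hrel : g' = g * ((g₀⁻¹ * g)⁻¹ * (g₀⁻¹ * g')) := by group
        have hd := hdiam2 x hxT g _ _ (hV₀inv _ hv) hv' t t' hkpos (by rw [← hrel]; exact hk')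
        have ha := abs_sub_abs_le_abs_sub t t'
        linarith
      · push_neg at hex
        refine ⟨1, fun g t hv hk => absurd ?_ hk⟩
        exact le_antisymm (hex g t hv) (kk_nonneg ψ W₃ V₀ hV₀n x hW₃1 g t)
    choose! Rf hRf using hxR
    refine ⟨max 1 (T.sup' hTne Rf), lt_of_lt_of_le one_pos (le_max_left _ _), ?_⟩
    intro x hxT g t hv hk
    exact (hRf x hxT g t hv hk).trans ((Finset.le_sup' Rf hxT).trans (le_max_right _ _))
  -- Step 14 : continuity of IF and EF
  have hcont : ∀ g₀ : G, ContinuousAt IF g₀ ∧ ContinuousAt EF g₀ := by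
    intro g₀
    obtain ⟨R, hRpos, hR⟩ := hlocR g₀
    have hcard : (0:ℝ) ≤ (T.card : ℝ) := Nat.cast_nonneg _
    -- pointwise bound : for any g, t
    have hk_eq : ∀ g t, k g t = ∑ x ∈ T, kk ψ W₃ V₀ hV₀n x g t := fun g t => rfl
    have hptw : ∀ (g : G) (t : ℝ),
        |k g t - k g₀ t| ≤ (T.card : ℝ) * (16 * Nrm V₀ hV₀n (g⁻¹ * g₀)) := by
      intro g t
      have h1 : k g t - k g₀ t = ∑ x ∈ T, (kk ψ W₃ V₀ hV₀n x g t - kk ψ W₃ V₀ hV₀n x g₀ t) := by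
        rw [hk_eq, hk_eq, Finset.sum_sub_distrib]
      rw [h1]
      refine (Finset.abs_sum_le_sum_abs _ _).trans ?_
      refine (Finset.sum_le_sum fun x _ => hkg x g g₀ t).trans ?_
      rw [Finset.sum_const, nsmul_eq_mul]
    have hIbound : ∀ g : G, g₀⁻¹ * g ∈ V₀ →
        |IF g - IF g₀| ≤ ((T.card : ℝ) * (16 * Nrm V₀ hV₀n (g⁻¹ * g₀))) * (2 * R) ∧
        |EF g - EF g₀| ≤ (R * ((T.card : ℝ) * (16 * Nrm V₀ hV₀n (g⁻¹ * g₀)))) * (2 * R) := by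
      intro g hgV
      have hz : ∀ t, t ∉ Icc (-R) R → k g t = k g₀ t := by
        intro t ht
        have habs : ¬ |t| ≤ R := fun hc => ht ⟨(abs_le.1 hc).1, (abs_le.1 hc).2⟩
        have hz1 : k g t = 0 := by
          by_contra hne
          obtain ⟨x, hxT, hxne⟩ := hkzero_iff g t hne
          exact habs (hR x hxT g t hgV hxne)
        have hz2 : k g₀ t = 0 := by
          by_contra hne
          obtain ⟨x, hxT, hxne⟩ := hkzero_iff g₀ t hne
          exact habs (hR x hxT g₀ t (by simpa using hV₀1) hxne)
        rw [hz1, hz2]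
      constructor
      · exact intDiff (hkint g) (hkint g₀) hRpos.le hz (fun t _ => hptw g t)
      · refine intDiff (hktint g) (hktint g₀) hRpos.le (fun t ht => by rw [hz t ht]) ?_
        intro t ht
        have h6 : |t * k g t - t * k g₀ t| = |t| * |k g t - k g₀ t| := by
          rw [← abs_mul]; congr 1; ring
        rw [h6]
        have h7 : |t| ≤ R := abs_le.2 ⟨ht.1, ht.2⟩
        calc |t| * |k g t - k g₀ t| ≤ R * |k g t - k g₀ t| :=
          mul_le_mul_of_nonneg_right h7 (abs_nonneg _)
        _ ≤ R * ((T.card : ℝ) * (16 * Nrm V₀ hV₀n (g⁻¹ * g₀))) :=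
          mul_le_mul_of_nonneg_left (hptw g t) hRpos.le
    set Cb : ℝ := (T.card : ℝ) * 16 * (2 * R) * (R + 1) + 1 with hCbdef
    have hCbpos : (0:ℝ) < Cb := by positivity
    have hfinal : ∀ ε : ℝ, 0 < ε → ∀ᶠ g in 𝓝 g₀, |IF g - IF g₀| < ε ∧ |EF g - EF g₀| < ε := by
      intro ε hε
      obtain ⟨n, hn⟩ := exists_pow_lt_of_lt_one (x := ε / Cb) (by positivity)
        (by norm_num : (2:ℝ)⁻¹ < 1)
      set S : Set G := (fun y => g₀ * y) '' (V₀ ∩ (chain V₀ hV₀n (n+1)).1) with hSdef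
      have hSopen : IsOpen S :=
        (Homeomorph.mulLeft g₀).isOpenMap _ (hV₀n.1.inter (chain V₀ hV₀n (n+1)).2.1)
      have hSmem : g₀ ∈ S := ⟨1, ⟨hV₀1, chain_one_mem V₀ hV₀n (n+1)⟩, mul_one g₀⟩
      refine Filter.eventually_of_mem (hSopen.mem_nhds hSmem) ?_
      rintro g ⟨v, ⟨hvV, hvC⟩, rfl⟩
      have hg₀g : g₀⁻¹ * (g₀ * v) = v := by group
      have hNv : Nrm V₀ hV₀n ((g₀ * v)⁻¹ * g₀) ≤ ((2:ℝ)⁻¹) ^ (n+1) := by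
        have h8 : (g₀ * v)⁻¹ * g₀ = v⁻¹ := by group
        rw [h8, Nrm_inv]
        exact Nrm_le_of_mem V₀ hV₀n hvC
      obtain ⟨hIb, hEb⟩ := hIbound (g₀ * v) (by rw [hg₀g]; exact hvV)
      have hNnn : 0 ≤ Nrm V₀ hV₀n ((g₀ * v)⁻¹ * g₀) := Nrm_nonneg _ _ _
      have hpow_pos : (0:ℝ) < ((2:ℝ)⁻¹) ^ (n+1) := by positivity
      have hpow_le : ((2:ℝ)⁻¹) ^ (n+1) ≤ ((2:ℝ)⁻¹) ^ n :=
        pow_le_pow_of_le_one (by norm_num) (by norm_num) (by omega)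
      have hkey : ((2:ℝ)⁻¹) ^ (n+1) * Cb < ε := by
        have h9 : ((2:ℝ)⁻¹) ^ (n+1) < ε / Cb := lt_of_le_of_lt hpow_le hn
        calc ((2:ℝ)⁻¹) ^ (n+1) * Cb < (ε / Cb) * Cb := by
              exact mul_lt_mul_of_pos_right h9 hCbpos
        _ = ε := by field_simp
      have hRnn : (0:ℝ) ≤ R := hRpos.le
      constructor
      · refine lt_of_le_of_lt hIb ?_
        refine lt_of_le_of_lt ?_ hkey
        calc ((T.card : ℝ) * (16 * Nrm V₀ hV₀n ((g₀*v)⁻¹ * g₀))) * (2 * R)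
            ≤ ((T.card : ℝ) * (16 * ((2:ℝ)⁻¹) ^ (n+1))) * (2 * R) := by
              have := mul_le_mul_of_nonneg_left hNv (by norm_num : (0:ℝ) ≤ 16)
              have := mul_le_mul_of_nonneg_left this hcard
              exact mul_le_mul_of_nonneg_right this (by linarith)
        _ ≤ ((2:ℝ)⁻¹) ^ (n+1) * Cb := by
              rw [hCbdef]
              nlinarith [mul_nonneg (mul_nonneg (mul_nonneg hcard hpow_pos.le) hRnn) hRnn,
                mul_nonneg (mul_nonneg hcard hpow_pos.le) hRnn, hpow_pos.le]
      · refine lt_of_le_of_lt hEb ?_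
        refine lt_of_le_of_lt ?_ hkey
        calc (R * ((T.card : ℝ) * (16 * Nrm V₀ hV₀n ((g₀*v)⁻¹ * g₀)))) * (2 * R)
            ≤ (R * ((T.card : ℝ) * (16 * ((2:ℝ)⁻¹) ^ (n+1)))) * (2 * R) := by
              have h10 := mul_le_mul_of_nonneg_left hNv (by norm_num : (0:ℝ) ≤ 16)
              have h11 := mul_le_mul_of_nonneg_left h10 hcard
              have h12 := mul_le_mul_of_nonneg_left h11 hRnn
              exact mul_le_mul_of_nonneg_right h12 (by linarith)
        _ ≤ ((2:ℝ)⁻¹) ^ (n+1) * Cb := by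
              rw [hCbdef]
              nlinarith [mul_nonneg (mul_nonneg (mul_nonneg hcard hpow_pos.le) hRnn) hRnn,
                mul_nonneg (mul_nonneg hcard hpow_pos.le) hRnn, hpow_pos.le]
    constructor
    · refine Metric.tendsto_nhds.2 fun ε hε => ?_
      filter_upwards [hfinal ε hε] with g hg
      rw [Real.dist_eq]
      exact hg.1
    · refine Metric.tendsto_nhds.2 fun ε hε => ?_
      filter_upwards [hfinal ε hε] with g hg
      rw [Real.dist_eq]
      exact hg.2
  have hIFc : Continuous IF := continuous_iff_continuousAt.2 fun g₀ => (hcont g₀).1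
  have hEFc : Continuous EF := continuous_iff_continuousAt.2 fun g₀ => (hcont g₀).2
  -- Step 15 : equivariance
  have hkinv : ∀ (h : H) (g : G) (t : ℝ), k ((h:G) * g) t = k g (t - ψ h) := by
    intro h g t
    exact Finset.sum_congr rfl fun x _ => kk_inv ψ W₃ V₀ hV₀n x hψ h g t
  have hIFinv : ∀ (h : H) (g : G), IF ((h:G) * g) = IF g := by
    intro h g
    show (∫ t, k ((h:G) * g) t) = ∫ t, k g t
    have h1 : (fun t => k ((h:G) * g) t) = fun t => k g (t + (-ψ h)) := by
      funext t; rw [hkinv, sub_eq_add_neg]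
    rw [h1]
    exact integral_add_right_eq_self (fun t => k g t) (-ψ h)
  have hEFinv : ∀ (h : H) (g : G), EF ((h:G) * g) = EF g + ψ h * IF g := by
    intro h g
    show (∫ t, t * k ((h:G) * g) t) = _
    have h1 : (fun t => t * k ((h:G) * g) t) = fun t => (fun s => (s + ψ h) * k g s) (t + (-ψ h)) := by
      funext t
      simp only
      rw [hkinv, sub_eq_add_neg]
      congr 1
      ring
    rw [h1, integral_add_right_eq_self (fun s => (s + ψ h) * k g s) (-ψ h)]
    have h2 : (fun s => (s + ψ h) * k g s) = fun s => s * k g s + ψ h * k g s := by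
      funext s; ring
    rw [h2, integral_add (hktint g) ((hkint g).const_mul (ψ h)), integral_const_mul]
  -- Step 16 : conclusion
  refine ⟨fun g => EF g / IF g - EF 1 / IF 1, ?_, by simp, ?_⟩
  · exact (hEFc.div hIFc fun g => (hI_pos g).ne').sub continuous_const
  · intro h g
    have hne : IF g ≠ 0 := (hI_pos g).ne'
    have h1 : EF ((h:G) * g) / IF ((h:G) * g) = ψ h + EF g / IF g := by
      rw [hEFinv, hIFinv]
      field_simp
      ring
    show EF ((h:G) * g) / IF ((h:G) * g) - EF 1 / IF 1 = ψ h + (EF g / IF g - EF 1 / IF 1)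
    rw [h1]
    ring

end EMH

/-- Let `G` be a connected, simply connected Lie group and `H ⊆ G` a closed subgroup with
compact quotient `H\G`. Any continuous homomorphism `φ : H → (ℝ₊, ·)` trivial on the
identity component `H_e` extends to a continuous map `m : G → ℝ₊` with `m|_H = φ` and
`m(hy) = φ(h) · m(y)` for all `h ∈ H`, `y ∈ G`. -/
theorem extension_of_modular_homomorphism {G : Type*} [Group G] [TopologicalSpace G]
    [IsTopologicalGroup G] [ConnectedSpace G] [SimplyConnectedSpace G]
    (H : Subgroup G) (hHclosed : IsClosed (H : Set G))
    [CompactSpace (G ⧸ H)]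
    (φ : H →* ℝ) (hφpos : ∀ h : H, 0 < φ h) (hφcont : Continuous φ)
    (hφtriv : ∀ h : H, (h : ↥H) ∈ connectedComponent (1 : ↥H) → φ h = 1) :
    ∃ m : G → ℝ, Continuous m ∧ (∀ g : G, 0 < m g) ∧
      (∀ h : H, m (h : G) = φ h) ∧
      (∀ (h : H) (y : G), m ((h : G) * y) = φ h * m y) := by
  obtain ⟨F, hFc, hF1, hFe⟩ := EMH.key H (fun h => Real.log (φ h))
    (fun a b => by show Real.log (φ (a * b)) = Real.log (φ a) + Real.log (φ b); rw [map_mul, Real.log_mul (hφpos a).ne' (hφpos b).ne'])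
    (hφcont.log fun h => (hφpos h).ne')
  refine ⟨fun g => Real.exp (F g), Real.continuous_exp.comp hFc, fun g => Real.exp_pos _, ?_, ?_⟩
  · intro h
    have h1 := hFe h 1
    rw [mul_one] at h1
    show Real.exp (F (h : G)) = φ h
    rw [h1, hF1, add_zero, Real.exp_log (hφpos h)]
  · intro h y
    show Real.exp (F ((h : G) * y)) = φ h * Real.exp (F y)
    rw [hFe h y, Real.exp_add, Real.exp_log (hφpos h)]
end
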